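/- Fix p0 ∈ (0,1) and let L₁(a,b) = p0·max(s(a), s(b)) + (1−p0)·max(s(−a), s(−b)). Then the infimum of L₁ over ℝ² equals the binary entropy −p0·log(p0) − (1−p0)·log(1−p0), attained at a = b = log((1−p0)/p0). -/

import Mathlib

noncomputable def s (x : ℝ) : ℝ := Real.log (1 + Real.exp x)

noncomputable def L₁ (p0 a b : ℝ) : ℝ :=
  p0 * max (s a) (s b) + (1 - p0) * max (s (-a)) (s (-b))

lemma gibbs (p σ : ℝ) (hp0 : 0 < p) (hp1 : p < 1) (hs0 : 0 < σ) (hs1 : σ < 1) :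
    -p * Real.log p - (1 - p) * Real.log (1 - p) ≤
      -p * Real.log σ - (1 - p) * Real.log (1 - σ) := by
  have h1 : Real.log (σ / p) ≤ σ / p - 1 :=
    Real.log_le_sub_one_of_pos (by positivity)
  have h2 : Real.log ((1 - σ) / (1 - p)) ≤ (1 - σ) / (1 - p) - 1 :=
    Real.log_le_sub_one_of_pos (div_pos (by linarith) (by linarith))
  rw [Real.log_div (by linarith) (by linarith)] at h1
  rw [Real.log_div (by linarith) (by linarith)] at h2
  have hp : (0:ℝ) < 1 - p := by linarith
  have e1 : p * (Real.log σ - Real.log p) ≤ σ - p := by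
    have h := mul_le_mul_of_nonneg_left h1 hp0.le
    have hc : p * (σ / p - 1) = σ - p := by field_simp
    linarith
  have e2 : (1 - p) * (Real.log (1 - σ) - Real.log (1 - p)) ≤ (1 - σ) - (1 - p) := by
    have h := mul_le_mul_of_nonneg_left h2 hp.le
    have hc : (1 - p) * ((1 - σ) / (1 - p) - 1) = (1 - σ) - (1 - p) := by field_simp
    linarith
  nlinarith

lemma key (p0 : ℝ) (hp0 : 0 < p0) (hp1 : p0 < 1) (a : ℝ) :
    -p0 * Real.log p0 - (1 - p0) * Real.log (1 - p0) ≤ p0 * s a + (1 - p0) * s (-a) := by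
  set E := Real.exp a with hE
  have hEpos : 0 < E := Real.exp_pos a
  have hσ0 : 0 < 1 / (1 + E) := by positivity
  have hσ1 : 1 / (1 + E) < 1 := by
    rw [div_lt_one (by positivity)]; linarith
  have h := gibbs p0 (1 / (1 + E)) hp0 hp1 hσ0 hσ1
  have hlog1 : Real.log (1 / (1 + E)) = -Real.log (1 + E) := by
    rw [Real.log_div one_ne_zero (by positivity), Real.log_one]; ring
  have h1mσ : 1 - 1 / (1 + E) = E / (1 + E) := by
    field_simp; ring
  have hlog2 : Real.log (1 - 1 / (1 + E)) = Real.log E - Real.log (1 + E) := by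
    rw [h1mσ, Real.log_div hEpos.ne' (by positivity)]
  have hsa : s a = Real.log (1 + E) := rfl
  have hsna : s (-a) = Real.log (1 + E) - Real.log E := by
    unfold s
    rw [Real.exp_neg, ← hE]
    rw [show 1 + E⁻¹ = (1 + E) / E by field_simp; ring]
    rw [Real.log_div (by positivity) hEpos.ne']
  rw [hlog1, hlog2] at h
  rw [hsa, hsna]
  linarith

theorem L1_inf_is_binary_entropy (p0 : ℝ) (hp0 : 0 < p0) (hp1 : p0 < 1) :
    L₁ p0 (Real.log ((1 - p0) / p0)) (Real.log ((1 - p0) / p0)) =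
      -p0 * Real.log p0 - (1 - p0) * Real.log (1 - p0) ∧
    ∀ a b : ℝ,
      -p0 * Real.log p0 - (1 - p0) * Real.log (1 - p0) ≤ L₁ p0 a b := by
  have hq : (0:ℝ) < 1 - p0 := by linarith
  constructor
  · unfold L₁
    have ht : Real.exp (Real.log ((1 - p0) / p0)) = (1 - p0) / p0 :=
      Real.exp_log (by positivity)
    have ht' : Real.exp (-Real.log ((1 - p0) / p0)) = p0 / (1 - p0) := by
      rw [Real.exp_neg, ht, inv_div]
    have h1 : s (Real.log ((1 - p0) / p0)) = -Real.log p0 := by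
      unfold s
      rw [ht, show 1 + (1 - p0) / p0 = 1 / p0 by field_simp; ring,
        Real.log_div one_ne_zero hp0.ne', Real.log_one]
      ring
    have h2 : s (-Real.log ((1 - p0) / p0)) = -Real.log (1 - p0) := by
      unfold s
      rw [ht', show 1 + p0 / (1 - p0) = 1 / (1 - p0) by field_simp; ring,
        Real.log_div one_ne_zero hq.ne', Real.log_one]
      ring
    rw [h1, h2, max_self, max_self]
    ring
  · intro a b
    have h := key p0 hp0 hp1 a
    have hm1 : s a ≤ max (s a) (s b) := le_max_left _ _
    have hm2 : s (-a) ≤ max (s (-a)) (s (-b)) := le_max_left _ _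
    unfold L₁
    nlinarith
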